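/- arXiv:2312.09094 — 2 statements merged into one kernel-verified Lean document; each statement's English description precedes it below -/
import Mathlib

section
/- Let ≼ be a well-quasi-order on a set X of objects, and suppose the relation x ≼ y is decidable, membership in X is decidable, and P ⊆ X is downward closed for ≼. Then P is a decidable subset of X, i.e., there exists an algorithm deciding membership in P. -/
lemma computablePred_and {p q : ℕ → Prop} (hp : ComputablePred p) (hq : ComputablePred q) :
    ComputablePred fun x => p x ∧ q x := by
  obtain ⟨f, hf, rfl⟩ := ComputablePred.computable_iff.mp hp
  obtain ⟨g, hg, rfl⟩ := ComputablePred.computable_iff.mp hq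
  exact ComputablePred.computable_iff.mpr
    ⟨fun x => f x && g x, Primrec.and.to_comp.comp hf hg, by
      funext x; simp [Bool.and_eq_true]⟩

lemma computablePred_comp {α β} [Primcodable α] [Primcodable β] {p : β → Prop} {f : α → β}
    (hp : ComputablePred p) (hf : Computable f) : ComputablePred fun x => p (f x) := by
  obtain ⟨g, hg, rfl⟩ := ComputablePred.computable_iff.mp hp
  exact ComputablePred.computable_iff.mpr ⟨fun x => g (f x), hg.comp hf, rfl⟩

lemma computablePred_const {α} [Primcodable α] (b : Prop) [Decidable b] :
    ComputablePred fun _ : α => b := by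
  exact ComputablePred.computable_iff.mpr
    ⟨fun _ => decide b, Computable.const _, by funext x; simp⟩

/-- Finite basis for an upward-closed subset of a wqo. -/
lemma finite_basis (X S : Set ℕ) (r : ℕ → ℕ → Prop)
    (hSX : S ⊆ X)
    (hwqo : ∀ f : ℕ → ℕ, (∀ n, f n ∈ X) → ∃ i j : ℕ, i < j ∧ r (f i) (f j))
    (hup : ∀ x ∈ X, ∀ y ∈ S, r y x → x ∈ S) :
    ∃ B : Finset ℕ, ↑B ⊆ S ∧ ∀ x ∈ X, (x ∈ S ↔ ∃ b ∈ B, r b x) := by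
  by_contra h
  push_neg at h
  have key : ∀ B : Finset ℕ, ↑B ⊆ S → ∃ x ∈ S, ∀ b ∈ B, ¬ r b x := by
    intro B hB
    obtain ⟨x, hxX, hx⟩ := h B hB
    rcases hx with ⟨hxS, hnb⟩ | ⟨hxS, b, hb, hrb⟩
    · exact ⟨x, hxS, hnb⟩
    · exact (hxS (hup x hxX b (hB hb) hrb)).elim
  choose g hg1 hg2 using key
  let next : {B : Finset ℕ // ↑B ⊆ S} → {B : Finset ℕ // ↑B ⊆ S} := fun B =>
    ⟨insert (g B.1 B.2) B.1, by
      rw [Finset.coe_insert, Set.insert_subset_iff]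
      exact ⟨hg1 _ _, B.2⟩⟩
  let h : ℕ → {B : Finset ℕ // ↑B ⊆ S} := fun n => next^[n] ⟨∅, by simp⟩
  let f : ℕ → ℕ := fun n => g (h n).1 (h n).2
  have hsucc : ∀ n, (h (n + 1)).1 = insert (f n) (h n).1 := by
    intro n
    show (next^[n + 1] _).1 = _
    rw [Function.iterate_succ_apply']
  have hmono : ∀ i n, i ≤ n → (h i).1 ⊆ (h n).1 := by
    intro i n hin
    induction n with
    | zero => simp_all
    | succ n ih =>
      rcases Nat.lt_or_ge i (n + 1) with hlt | hge
      · rw [hsucc]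
        exact (ih (Nat.lt_succ_iff.mp hlt)).trans (Finset.subset_insert _ _)
      · have : i = n + 1 := le_antisymm hin hge
        subst this; rfl
  have hfmem : ∀ i n, i < n → f i ∈ (h n).1 := by
    intro i n hin
    apply hmono (i + 1) n hin
    rw [hsucc]
    exact Finset.mem_insert_self _ _
  have hfS : ∀ n, f n ∈ S := fun n => hg1 _ _
  obtain ⟨i, j, hij, hr⟩ := hwqo f (fun n => hSX (hfS n))
  exact hg2 (h j).1 (h j).2 (f i) (hfmem i j hij) hr

/-- If `r` is a well-quasi-order on a set `X` (of naturals, encoding arbitrary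
effectively-presented objects), the relation `r` and membership in `X` are decidable
(computable), and `P ⊆ X` is downward closed for `r`, then membership in `P` is
decidable by an algorithm. -/
theorem computablePred_of_downwardClosed (X P : Set ℕ) (r : ℕ → ℕ → Prop)
    (hXdec : ComputablePred (· ∈ X))
    (hrdec : ComputablePred fun q : ℕ × ℕ => r q.1 q.2)
    (hrefl : ∀ x ∈ X, r x x)
    (htrans : ∀ x ∈ X, ∀ y ∈ X, ∀ z ∈ X, r x y → r y z → r x z)
    (hwqo : ∀ f : ℕ → ℕ, (∀ n, f n ∈ X) → ∃ i j : ℕ, i < j ∧ r (f i) (f j))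
    (hPX : P ⊆ X)
    (hdc : ∀ x ∈ X, ∀ y ∈ P, r x y → x ∈ P) :
    ComputablePred (· ∈ P) := by
  classical
  set S : Set ℕ := {x | x ∈ X ∧ x ∉ P} with hS
  have hSX : S ⊆ X := fun x hx => hx.1
  have hup : ∀ x ∈ X, ∀ y ∈ S, r y x → x ∈ S := by
    intro x hx y hy hr
    exact ⟨hx, fun hxP => hy.2 (hdc y hy.1 x hxP hr)⟩
  obtain ⟨B, hBS, hB⟩ := finite_basis X S r hSX hwqo hup
  have hchar : ∀ x, x ∈ P ↔ x ∈ X ∧ ∀ b ∈ B, ¬ r b x := by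
    intro x
    constructor
    · intro hxP
      refine ⟨hPX hxP, fun b hb hrb => ?_⟩
      have : x ∈ S := hup x (hPX hxP) b (hBS hb) hrb
      exact this.2 hxP
    · rintro ⟨hxX, hnb⟩
      by_contra hxP
      obtain ⟨b, hb, hrb⟩ := (hB x hxX).mp ⟨hxX, hxP⟩
      exact hnb b hb hrb
  have hBdec : ComputablePred fun x : ℕ => ∀ b ∈ B, ¬ r b x := by
    clear hBS hB hchar
    induction B using Finset.induction with
    | empty => exact (computablePred_const True).of_eq (by simp)
    | @insert a B ha ih =>
      have h1 : ComputablePred fun x : ℕ => ¬ r a x :=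
        (computablePred_comp hrdec ((Computable.const a).pair Computable.id)).not
      exact (computablePred_and h1 ih).of_eq (by intro x; simp [forall_and])
  exact (computablePred_and hXdec hBdec).of_eq (fun x => (hchar x).symm)
end

section
/- If (A, ≼) is a well-quasi-order, then the set of finite sequences over A, ordered by the subsequence embedding order (u ≼* v iff u embeds as a subsequence of v with each entry of u ≼ the corresponding entry of v), is a well-quasi-order. (Higman's lemma, used in Nash-Williams' proof of Kruskal's theorem.) -/
def IsWQO {X : Type*} (r : X → X → Prop) : Prop :=
  ∀ f : ℕ → X, ∃ i j : ℕ, i < j ∧ r (f i) (f j)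

open Set

/-- A sublist embedding into the tail extends to the whole list. -/
lemma sublistForall₂_of_tail {A : Type*} {r : A → A → Prop} {l L : List A}
    (h : List.SublistForall₂ r l L.tail) : List.SublistForall₂ r l L := by
  cases L with
  | nil => exact h
  | cons a t => exact List.SublistForall₂.cons_right h

/-- Ramsey-type lemma: under an almost-full relation, every sequence has a subsequence
all of whose pairs (in order) are related. -/
lemma IsWQO.exists_subseq {A : Type*} {r : A → A → Prop} (hwqo : IsWQO r) (f : ℕ → A) :
    ∃ g : ℕ ↪o ℕ, ∀ m n : ℕ, m < n → r (f (g m)) (f (g n)) := by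
  classical
  -- iterated set construction
  let nxt : Set ℕ → Set ℕ := fun S =>
    if ({m ∈ S | sInf S < m ∧ r (f (sInf S)) (f m)}).Infinite then
      {m ∈ S | sInf S < m ∧ r (f (sInf S)) (f m)}
    else
      {m ∈ S | sInf S < m ∧ ¬ r (f (sInf S)) (f m)}
  have hnxt_sub : ∀ S, nxt S ⊆ {m ∈ S | sInf S < m} := by
    intro S
    dsimp only [nxt]
    split_ifs <;> exact fun m hm => ⟨hm.1, hm.2.1⟩
  have hnxt_inf : ∀ S : Set ℕ, S.Infinite → (nxt S).Infinite := by
    intro S hS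
    dsimp only [nxt]
    split_ifs with h
    · exact h
    · have hsplit : {m ∈ S | sInf S < m} ⊆
          {m ∈ S | sInf S < m ∧ r (f (sInf S)) (f m)} ∪
          {m ∈ S | sInf S < m ∧ ¬ r (f (sInf S)) (f m)} := by
        intro m hm
        by_cases hr : r (f (sInf S)) (f m)
        · exact Or.inl ⟨hm.1, hm.2, hr⟩
        · exact Or.inr ⟨hm.1, hm.2, hr⟩
      have hinf : ({m ∈ S | sInf S < m}).Infinite := by
        have : S \ {m | m ≤ sInf S} ⊆ {m ∈ S | sInf S < m} := by
          intro m hm; exact ⟨hm.1, lt_of_not_ge hm.2⟩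
        exact ((hS.diff (Set.finite_Iic (sInf S))).mono this)
      rcases Set.infinite_union.mp (hinf.mono hsplit) with h1 | h2
      · exact absurd h1 h
      · exact h2
  -- the sequence of sets
  let seq : ℕ → Set ℕ := fun k => nxt^[k] Set.univ
  have hseq_inf : ∀ k, (seq k).Infinite := by
    intro k
    induction k with
    | zero => exact Set.infinite_univ
    | succ k ih =>
      have : seq (k+1) = nxt (seq k) := Function.iterate_succ_apply' nxt k Set.univ
      rw [this]; exact hnxt_inf _ ih
  have hseq_succ : ∀ k, seq (k+1) = nxt (seq k) := fun k =>
    Function.iterate_succ_apply' nxt k Set.univ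
  let a : ℕ → ℕ := fun k => sInf (seq k)
  have ha_mem : ∀ k, a k ∈ seq k := fun k => Nat.sInf_mem (hseq_inf k).nonempty
  have hsub : ∀ k, seq (k+1) ⊆ {m ∈ seq k | a k < m} := by
    intro k; rw [hseq_succ k]; exact hnxt_sub _
  have hmono : ∀ i j : ℕ, i ≤ j → seq j ⊆ seq i := by
    intro i j hij
    induction j with
    | zero => simp_all
    | succ j ih =>
      rcases Nat.lt_or_ge i (j+1) with h | h
      · exact fun m hm => ih (Nat.lt_succ_iff.mp h) ((hsub j hm).1)
      · have : i = j + 1 := le_antisymm hij h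
        subst this; exact fun m hm => hm
  -- membership in later seq
  have hmem_later : ∀ i j : ℕ, i < j → a j ∈ seq (i+1) := by
    intro i j hij
    exact hmono (i+1) j hij (ha_mem j)
  -- the color of step i
  let cond : ℕ → Prop := fun i =>
    ({m ∈ seq i | sInf (seq i) < m ∧ r (f (sInf (seq i))) (f m)}).Infinite
  have hcond_true : ∀ i, cond i → ∀ m ∈ seq (i+1), r (f (a i)) (f m) := by
    intro i hc m hm
    rw [hseq_succ i] at hm
    dsimp only [nxt] at hm
    dsimp only [cond] at hc
    rw [if_pos hc] at hm
    exact hm.2.2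
  have hcond_false : ∀ i, ¬ cond i → ∀ m ∈ seq (i+1), ¬ r (f (a i)) (f m) := by
    intro i hc m hm
    rw [hseq_succ i] at hm
    dsimp only [nxt] at hm
    dsimp only [cond] at hc
    rw [if_neg hc] at hm
    exact hm.2.2
  have ha_strict : StrictMono a := strictMono_nat_of_lt_succ (fun k =>
    (hsub k (ha_mem (k+1))).2)
  -- the set of "false" colors is finite
  have hC_fin : {i | ¬ cond i}.Finite := by
    by_contra hCinf
    have hCinf' : ({i | ¬ cond i} : Set ℕ).Infinite := hCinf
    haveI : Infinite ({i | ¬ cond i} : Set ℕ) := hCinf'.to_subtype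
    let e := Nat.orderEmbeddingOfSet {i | ¬ cond i}
    obtain ⟨i, j, hij, hr⟩ := hwqo (fun k => f (a (e k)))
    have hei : (e i : ℕ) ∈ {i | ¬ cond i} := by
      have := @Set.mem_range_self _ _ (e : ℕ → ℕ) i
      rwa [Nat.orderEmbeddingOfSet_range] at this
    have heij : (e i : ℕ) < e j := e.strictMono hij
    exact hcond_false (e i) hei _ (hmem_later (e i) (e j) heij) hr
  -- choose N beyond all false colors
  obtain ⟨N, hN⟩ : ∃ N, ∀ i, N ≤ i → cond i := by
    rcases Set.Finite.bddAbove hC_fin with ⟨B, hB⟩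
    refine ⟨B + 1, fun i hi => ?_⟩
    by_contra hc
    exact absurd (hB hc) (by omega)
  refine ⟨OrderEmbedding.ofStrictMono (fun k => a (N + k))
    (fun i j hij => ha_strict (by omega)), fun m n hmn => ?_⟩
  exact hcond_true (N + m) (hN _ (Nat.le_add_right N m)) _
    (hmem_later (N + m) (N + n) (by omega))

/-- Higman's lemma: if `(A, r)` is a well-quasi-order, then finite sequences over `A`
ordered by subsequence embedding (`List.SublistForall₂ r`) form a well-quasi-order. -/
theorem higman {A : Type*} (r : A → A → Prop) (hwqo : IsWQO r) :
    IsWQO (List.SublistForall₂ r) := by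
  classical
  rcases isEmpty_or_nonempty A with hA | hA
  · intro f
    refine ⟨0, 1, Nat.zero_lt_one, ?_⟩
    have h0 : f 0 = [] := by
      cases h : f 0 with
      | nil => rfl
      | cons a t => exact (hA.false a).elim
    rw [h0]
    exact List.SublistForall₂.nil
  inhabit A
  -- reduce to the "no minimal bad sequence" statement on `univ`
  have key : (Set.univ : Set (List A)).PartiallyWellOrderedOn (List.SublistForall₂ r) := by
    rw [Set.PartiallyWellOrderedOn.iff_not_exists_isMinBadSeq List.length]
    rintro ⟨f, hf1, hf2⟩
    have hnil : ∀ n, f n ≠ List.nil := fun n con =>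
      hf1.2 n n.succ n.lt_succ_self (con.symm ▸ List.SublistForall₂.nil)
    obtain ⟨g, hg⟩ := hwqo.exists_subseq (fun n => (f n).headI)
    have hf' :=
      hf2 (g 0) (fun n => if n < g 0 then f n else List.tail (f (g (n - g 0))))
        (fun m hm => (if_pos hm).symm) ?_
    swap
    · simp only [if_neg (lt_irrefl (g 0)), Nat.sub_self]
      rw [List.length_tail, ← Nat.pred_eq_sub_one]
      exact Nat.pred_lt fun con => hnil _ (List.length_eq_zero_iff.1 con)
    rw [Set.PartiallyWellOrderedOn.IsBadSeq] at hf'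
    push_neg at hf'
    obtain ⟨m, n, mn, hmn⟩ := hf' fun n => Set.mem_univ _
    by_cases hn : n < g 0
    · apply hf1.2 m n mn
      rwa [if_pos hn, if_pos (mn.trans hn)] at hmn
    · obtain ⟨n', rfl⟩ := Nat.exists_eq_add_of_le (not_lt.1 hn)
      rw [if_neg hn, add_comm (g 0) n', Nat.add_sub_cancel_right] at hmn
      split_ifs at hmn with hm
      · apply hf1.2 m (g n') (lt_of_lt_of_le hm (g.monotone n'.zero_le))
        exact sublistForall₂_of_tail hmn
      · rw [← Nat.sub_lt_iff_lt_add' (le_of_not_gt hm)] at mn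
        apply hf1.2 _ _ (g.lt_iff_lt.2 mn)
        rw [← List.cons_head!_tail (hnil (g (m - g 0))), ← List.cons_head!_tail (hnil (g n'))]
        exact List.SublistForall₂.cons (hg _ _ mn) hmn
  intro f
  exact key.exists_lt (fun n => Set.mem_univ (f n))
end
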